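/- Let u_- > u_+, v_± > 0, u_+/v_+ < u_- /v_-. With v_*(ε) as in the two-shock intermediate state formula, if 0 > u_- > u_+ then v_*(ε) → (u_+/u_-)v_- as ε → 0⁺. -/

import Mathlib

theorem vstar_limit_neg (um up vm vp : ℝ) (h : um > up) (hm : 0 > um)
    (hvm : 0 < vm) (hvp : 0 < vp) (hr : up / vp < um / vm) :
    Filter.Tendsto (fun e : ℝ =>
      (up - um - ((up + Real.sqrt (up ^ 2 + 4 * e * vp)) / (2 * vp)) * vp + ((um - Real.sqrt (um ^ 2 + 4 * e * vm)) / (2 * vm)) * vm) / ((um - Real.sqrt (um ^ 2 + 4 * e * vm)) / (2 * vm) - (up + Real.sqrt (up ^ 2 + 4 * e * vp)) / (2 * vp)))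
      (nhdsWithin 0 (Set.Ioi 0)) (nhds ((up / um) * vm)) := by
  have hup : up < 0 := h.trans hm
  have hsp0 : Real.sqrt (up ^ 2 + 4 * (0:ℝ) * vp) = -up := by
    rw [show up ^ 2 + 4 * (0:ℝ) * vp = up ^ 2 by ring, Real.sqrt_sq_eq_abs, abs_of_neg hup]
  have hsm0 : Real.sqrt (um ^ 2 + 4 * (0:ℝ) * vm) = -um := by
    rw [show um ^ 2 + 4 * (0:ℝ) * vm = um ^ 2 by ring, Real.sqrt_sq_eq_abs, abs_of_neg hm]
  have hden0 : ((um - Real.sqrt (um ^ 2 + 4 * (0:ℝ) * vm)) / (2 * vm)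
      - (up + Real.sqrt (up ^ 2 + 4 * (0:ℝ) * vp)) / (2 * vp)) ≠ 0 := by
    rw [hsm0, hsp0]
    have : um - -um = 2 * um := by ring
    rw [this]
    have : up + -up = 0 := by ring
    rw [this]
    simp only [zero_div, sub_zero]
    refine div_ne_zero ?_ ?_ <;> [skip; positivity]
    have := hm; intro hcontra; nlinarith
  have hc : ContinuousAt (fun e : ℝ =>
      (up - um - ((up + Real.sqrt (up ^ 2 + 4 * e * vp)) / (2 * vp)) * vp + ((um - Real.sqrt (um ^ 2 + 4 * e * vm)) / (2 * vm)) * vm) / ((um - Real.sqrt (um ^ 2 + 4 * e * vm)) / (2 * vm) - (up + Real.sqrt (up ^ 2 + 4 * e * vp)) / (2 * vp))) 0 := by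
    apply ContinuousAt.div
    · fun_prop
    · fun_prop
    · exact hden0
  have h0 := hc.tendsto.mono_left (nhdsWithin_le_nhds (s := Set.Ioi (0:ℝ)))
  convert h0 using 2
  rw [hsm0, hsp0]
  rw [div_mul_eq_mul_div, div_mul_eq_mul_div]
  field_simp [hvp.ne', hvm.ne', hm.ne]
  ring
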